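/- Let Y₀, Y₁ be real random variables with marginal distributions F₀, F₁, and let r₁, ℓ₀ ∈ ℝ be such that P(Y₁ > r₁) > α and P(Y₀ < ℓ₀) > α. Then there exists a joint distribution (coupling) of (Y₀, Y₁) with the given marginals under which P(Y₁ > r₁, Y₀ < ℓ₀) > α, and hence P(Y₁ − Y₀ > r₁ − ℓ₀) > α; consequently any interval that is a valid (1−α) prediction interval for Y₁−Y₀ under all couplings of these marginals must contain a point ≥ r₁ − ℓ₀. -/

import Mathlib

open MeasureTheory
open scoped ENNReal

/-- A coupling of marginal distributions `F₀, F₁` on `ℝ` is a joint distribution on `ℝ × ℝ`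
whose first marginal is `F₀` (the law of `Y₀`) and second marginal is `F₁` (the law of `Y₁`). -/
def IsCoupling (F₀ F₁ : Measure ℝ) (μ : Measure (ℝ × ℝ)) : Prop :=
  IsProbabilityMeasure μ ∧ μ.map Prod.fst = F₀ ∧ μ.map Prod.snd = F₁

lemma exists_coupling_min_le (F₀ F₁ : Measure ℝ) [IsProbabilityMeasure F₀]
    [IsProbabilityMeasure F₁] {A B : Set ℝ} (hAm : MeasurableSet A) (hBm : MeasurableSet B)
    (ha0 : F₀ A ≠ 0) (hb0 : F₁ B ≠ 0) :
    ∃ μ : Measure (ℝ × ℝ), IsCoupling F₀ F₁ μ ∧ min (F₀ A) (F₁ B) ≤ μ (A ×ˢ B) := by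
  set a := F₀ A with haa
  set b := F₁ B with hbb
  have ha1 : a ≤ 1 := prob_le_one
  have hb1 : b ≤ 1 := prob_le_one
  have haT : a ≠ ⊤ := (lt_of_le_of_lt ha1 ENNReal.one_lt_top).ne
  have hbT : b ≠ ⊤ := (lt_of_le_of_lt hb1 ENNReal.one_lt_top).ne
  set m := min a b with hmdef
  have hma : m ≤ a := min_le_left _ _
  have hmb : m ≤ b := min_le_right _ _
  have hm1 : m ≤ 1 := le_trans hma ha1
  have hmT : m ≠ ⊤ := (lt_of_le_of_lt hm1 ENNReal.one_lt_top).ne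
  set P := F₀.restrict A with hP
  set P' := F₀.restrict Aᶜ with hP'
  set Q := F₁.restrict B with hQ
  set Q' := F₁.restrict Bᶜ with hQ'
  have hPu : P Set.univ = a := Measure.restrict_apply_univ _
  have hQu : Q Set.univ = b := Measure.restrict_apply_univ _
  have hP'u : P' Set.univ = 1 - a := by
    rw [hP', Measure.restrict_apply_univ, measure_compl hAm (by exact haT), measure_univ]
  have hQ'u : Q' Set.univ = 1 - b := by
    rw [hQ', Measure.restrict_apply_univ, measure_compl hBm (by exact hbT), measure_univ]
  set R₀ : Measure ℝ := ((a - m) * a⁻¹) • P + P' with hR₀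
  set R₁ : Measure ℝ := ((b - m) * b⁻¹) • Q + Q' with hR₁
  have hR₀u : R₀ Set.univ = 1 - m := by
    rw [hR₀, Measure.add_apply, Measure.smul_apply, hPu, hP'u, smul_eq_mul, mul_assoc,
      ENNReal.inv_mul_cancel ha0 haT, mul_one, add_comm]
    exact tsub_add_tsub_cancel ha1 hma
  have hR₁u : R₁ Set.univ = 1 - m := by
    rw [hR₁, Measure.add_apply, Measure.smul_apply, hQu, hQ'u, smul_eq_mul, mul_assoc,
      ENNReal.inv_mul_cancel hb0 hbT, mul_one, add_comm]
    exact tsub_add_tsub_cancel hb1 hmb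
  have hRfin₀ : IsFiniteMeasure R₀ := ⟨by rw [hR₀u]; exact lt_of_le_of_lt tsub_le_self ENNReal.one_lt_top⟩
  have hRfin₁ : IsFiniteMeasure R₁ := ⟨by rw [hR₁u]; exact lt_of_le_of_lt tsub_le_self ENNReal.one_lt_top⟩
  set μ : Measure (ℝ × ℝ) := ((a * b)⁻¹ * m) • (P.prod Q) + (1 - m)⁻¹ • (R₀.prod R₁) with hμ
  -- key scalar identity
  have hscal : ∀ ν : Measure ℝ, ν Set.univ = 1 - m → ((1 - m)⁻¹ * (1 - m)) • ν = ν := by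
    intro ν hν
    rcases eq_or_ne m 1 with hm | hm
    · have : ν = 0 := by
        rw [← Measure.measure_univ_eq_zero, hν, hm, tsub_self]
      rw [this, smul_zero]
    · have h1m : (1 : ℝ≥0∞) - m ≠ 0 := by
        simpa [tsub_eq_zero_iff_le] using lt_of_le_of_ne hm1 hm
      have h1mT : (1 : ℝ≥0∞) - m ≠ ⊤ := (lt_of_le_of_lt tsub_le_self ENNReal.one_lt_top).ne
      rw [ENNReal.inv_mul_cancel h1m h1mT, one_smul]
  have habinv : (a * b)⁻¹ = a⁻¹ * b⁻¹ := ENNReal.mul_inv (Or.inl ha0) (Or.inl haT)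
  -- first marginal
  have hfst : μ.map Prod.fst = F₀ := by
    rw [hμ, Measure.map_add _ _ measurable_fst, Measure.map_smul, Measure.map_smul,
      Measure.map_fst_prod, Measure.map_fst_prod, hQu, hR₁u, smul_smul, smul_smul, hscal _ hR₀u]
    have : (a * b)⁻¹ * m * b = m * a⁻¹ := by
      rw [habinv]
      calc a⁻¹ * b⁻¹ * m * b = m * a⁻¹ * (b⁻¹ * b) := by ring
        _ = m * a⁻¹ := by rw [ENNReal.inv_mul_cancel hb0 hbT, mul_one]
    rw [this, hR₀, ← add_assoc, ← add_smul]
    have : m * a⁻¹ + (a - m) * a⁻¹ = 1 := by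
      rw [← add_mul, add_tsub_cancel_of_le hma, ENNReal.mul_inv_cancel ha0 haT]
    rw [this, one_smul]
    exact Measure.restrict_add_restrict_compl hAm
  -- second marginal
  have hsnd : μ.map Prod.snd = F₁ := by
    rw [hμ, Measure.map_add _ _ measurable_snd, Measure.map_smul, Measure.map_smul,
      Measure.map_snd_prod, Measure.map_snd_prod, hPu, hR₀u, smul_smul, smul_smul, hscal _ hR₁u]
    have : (a * b)⁻¹ * m * a = m * b⁻¹ := by
      rw [habinv]
      calc a⁻¹ * b⁻¹ * m * a = m * b⁻¹ * (a⁻¹ * a) := by ring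
        _ = m * b⁻¹ := by rw [ENNReal.inv_mul_cancel ha0 haT, mul_one]
    rw [this, hR₁, ← add_assoc, ← add_smul]
    have : m * b⁻¹ + (b - m) * b⁻¹ = 1 := by
      rw [← add_mul, add_tsub_cancel_of_le hmb, ENNReal.mul_inv_cancel hb0 hbT]
    rw [this, one_smul]
    exact Measure.restrict_add_restrict_compl hBm
  have hprob : IsProbabilityMeasure μ := by
    constructor
    have : μ.map Prod.fst Set.univ = μ Set.univ := by
      rw [Measure.map_apply measurable_fst MeasurableSet.univ, Set.preimage_univ]
    rw [← this, hfst, measure_univ]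
  refine ⟨μ, ⟨hprob, hfst, hsnd⟩, ?_⟩
  have h1 : ((a * b)⁻¹ * m) • (P.prod Q) (A ×ˢ B) = m := by
    have hPA : P A = a := by rw [hP, Measure.restrict_apply hAm, Set.inter_self]
    have hQB : Q B = b := by rw [hQ, Measure.restrict_apply hBm, Set.inter_self]
    rw [Measure.prod_prod, hPA, hQB, smul_eq_mul]
    calc (a * b)⁻¹ * m * (a * b) = m * ((a * b)⁻¹ * (a * b)) := by ring
      _ = m := by
        rw [ENNReal.inv_mul_cancel (mul_ne_zero ha0 hb0) (ENNReal.mul_ne_top haT hbT), mul_one]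
  calc m ≤ ((a * b)⁻¹ * m) • (P.prod Q) (A ×ˢ B) := h1.ge
    _ ≤ μ (A ×ˢ B) := by
      rw [hμ, Measure.add_apply]
      exact le_add_right le_rfl

/-- If `P(Y₁ > r₁) > α` and `P(Y₀ < ℓ₀) > α` under the marginals, then some coupling puts
mass `> α` on `{Y₁ > r₁, Y₀ < ℓ₀}`, hence on `{Y₁ - Y₀ > r₁ - ℓ₀}`; consequently any
prediction interval valid at level `1-α` under every coupling contains a point `≥ r₁ - ℓ₀`. -/
theorem stmt_11 (F₀ F₁ : Measure ℝ) [IsProbabilityMeasure F₀] [IsProbabilityMeasure F₁]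
    (r₁ ℓ₀ α : ℝ) (hα0 : 0 < α) (hα : α < 1 / 2)
    (h₁ : ENNReal.ofReal α < F₁ {y | r₁ < y})
    (h₀ : ENNReal.ofReal α < F₀ {y | y < ℓ₀}) :
    (∃ μ : Measure (ℝ × ℝ), IsCoupling F₀ F₁ μ ∧
      ENNReal.ofReal α < μ {p | r₁ < p.2 ∧ p.1 < ℓ₀} ∧
      ENNReal.ofReal α < μ {p | r₁ - ℓ₀ < p.2 - p.1}) ∧
    (∀ I : Set ℝ,
      (∀ μ : Measure (ℝ × ℝ), IsCoupling F₀ F₁ μ →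
        ENNReal.ofReal (1 - α) ≤ μ {p | p.2 - p.1 ∈ I}) →
      ∃ x ∈ I, r₁ - ℓ₀ ≤ x) := by
  have hAm : MeasurableSet {y : ℝ | y < ℓ₀} := measurableSet_Iio
  have hBm : MeasurableSet {y : ℝ | r₁ < y} := measurableSet_Ioi
  have ha0 : F₀ {y | y < ℓ₀} ≠ 0 := (lt_of_le_of_lt zero_le h₀).ne'
  have hb0 : F₁ {y | r₁ < y} ≠ 0 := (lt_of_le_of_lt zero_le h₁).ne'
  obtain ⟨μ, hcoup, hmin⟩ := exists_coupling_min_le F₀ F₁ hAm hBm ha0 hb0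
  have hseteq : ({y : ℝ | y < ℓ₀} ×ˢ {y : ℝ | r₁ < y} : Set (ℝ × ℝ))
      = {p : ℝ × ℝ | r₁ < p.2 ∧ p.1 < ℓ₀} := by
    ext ⟨x, y⟩
    simp only [Set.mem_prod, Set.mem_setOf_eq]
    tauto
  have hb1 : ENNReal.ofReal α < μ {p : ℝ × ℝ | r₁ < p.2 ∧ p.1 < ℓ₀} := by
    calc ENNReal.ofReal α < min (F₀ {y | y < ℓ₀}) (F₁ {y | r₁ < y}) := lt_min h₀ h₁
      _ ≤ μ ({y : ℝ | y < ℓ₀} ×ˢ {y : ℝ | r₁ < y}) := hmin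
      _ = _ := by rw [hseteq]
  have hsub : {p : ℝ × ℝ | r₁ < p.2 ∧ p.1 < ℓ₀} ⊆ {p : ℝ × ℝ | r₁ - ℓ₀ < p.2 - p.1} := by
    rintro ⟨x, y⟩ ⟨h1, h2⟩
    exact sub_lt_sub h1 h2
  have hb2 : ENNReal.ofReal α < μ {p : ℝ × ℝ | r₁ - ℓ₀ < p.2 - p.1} :=
    lt_of_lt_of_le hb1 (measure_mono hsub)
  refine ⟨⟨μ, hcoup, hb1, hb2⟩, ?_⟩
  intro I hvalid
  by_contra hcon
  push_neg at hcon
  set S : Set (ℝ × ℝ) := {p : ℝ × ℝ | r₁ - ℓ₀ < p.2 - p.1} with hS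
  have hSm : MeasurableSet S :=
    measurableSet_lt measurable_const (measurable_snd.sub measurable_fst)
  set T : Set (ℝ × ℝ) := {p : ℝ × ℝ | p.2 - p.1 ∈ I} with hT
  have hdisj : Disjoint T S := by
    rw [Set.disjoint_left]
    rintro ⟨x, y⟩ hpT hpS
    exact absurd (hcon _ hpT) (not_lt.mpr (le_of_lt hpS))
  have hprob : IsProbabilityMeasure μ := hcoup.1
  have hsum : μ T + μ S ≤ 1 := by
    rw [← measure_union hdisj hSm]
    exact prob_le_one
  have h1 : ENNReal.ofReal (1 - α) + ENNReal.ofReal α = 1 := by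
    rw [← ENNReal.ofReal_add (by linarith) (le_of_lt hα0)]
    norm_num
  have : (1 : ℝ≥0∞) < μ T + μ S := by
    calc (1 : ℝ≥0∞) = ENNReal.ofReal (1 - α) + ENNReal.ofReal α := h1.symm
      _ < μ T + μ S := ENNReal.add_lt_add_of_le_of_lt
          ENNReal.ofReal_ne_top (hvalid μ hcoup) hb2
  exact absurd hsum (not_le.mpr this)
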